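/- Let m ≥ 3 be an integer, set a_m = (1/m^{3/2} − 1/(m+1)^{3/2})², and define υ_m(t) = sin(m·t)/m² − sin((m+1)·t)/(m+1)² − a_m·sin(t) for real t. Then there exists a real number t₁ with 2π/(2m+1) < t₁ < 3π/(2m) such that υ_m(t₁) = 0, υ_m(t) > 0 for all t with 0 < t < t₁, and υ_m(t) < 0 for all t with t₁ < t ≤ 2π/(m+1). -/

import Mathlib

set_option maxHeartbeats 1000000


open Real

/-- The function υ_m of Lemma 6.4. -/
noncomputable def upsilon (m : ℕ) (t : ℝ) : ℝ :=
  Real.sin (m * t) / (m : ℝ) ^ 2 - Real.sin (((m : ℝ) + 1) * t) / ((m : ℝ) + 1) ^ 2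
    - (1 / (m : ℝ) ^ ((3 : ℝ) / 2) - 1 / ((m : ℝ) + 1) ^ ((3 : ℝ) / 2)) ^ 2 * Real.sin t

lemma aux_a_bound (M : ℝ) (hM : 3 ≤ M) :
    0 < (1 / M ^ ((3 : ℝ) / 2) - 1 / (M + 1) ^ ((3 : ℝ) / 2)) ^ 2 ∧
    (1 / M ^ ((3 : ℝ) / 2) - 1 / (M + 1) ^ ((3 : ℝ) / 2)) ^ 2 ≤ 9 / (4 * M ^ 4 * (M + 1)) := by
  have hM0 : (0:ℝ) < M := by linarith
  have hM10 : (0:ℝ) < M + 1 := by linarith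
  have h32 : ∀ x : ℝ, 0 < x → x ^ ((3 : ℝ) / 2) = x * Real.sqrt x := by
    intro x hx
    rw [show (3:ℝ)/2 = 1 + 1/2 by norm_num, Real.rpow_add hx, Real.rpow_one,
      ← Real.sqrt_eq_rpow]
  rw [h32 M hM0, h32 (M+1) hM10]
  set s := Real.sqrt M with hsdef
  set s' := Real.sqrt (M+1) with hs'def
  have hs2 : s ^ 2 = M := Real.sq_sqrt hM0.le
  have hs'2 : s' ^ 2 = M + 1 := Real.sq_sqrt hM10.le
  have hs0 : 0 < s := Real.sqrt_pos.mpr hM0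
  have hs'0 : 0 < s' := Real.sqrt_pos.mpr hM10
  have hss' : s < s' := Real.sqrt_lt_sqrt hM0.le (by linarith)
  have hMs : M * s = s ^ 3 := by rw [← hs2]; ring
  have hMs' : (M + 1) * s' = s' ^ 3 := by rw [← hs'2]; ring
  have hdiff : (s' - s) * (s' + s) = 1 := by nlinarith [hs2, hs'2]
  have h2ss' : 2 * s * s' ≤ 2 * s ^ 2 + 1 := by nlinarith [hdiff, hs0, hss']
  have key : 2 * s * (s' ^ 3 - s ^ 3) ≤ 3 * (M + 1) := by nlinarith [h2ss', hs'2, hs2, hs0, hs'0]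
  have hd_pos : 0 < 1 / (M * s) - 1 / ((M + 1) * s') := by
    rw [sub_pos]
    apply one_div_lt_one_div_of_lt (by positivity)
    nlinarith [hss', hs0]
  constructor
  · positivity
  · have hd_le : 1 / (M * s) - 1 / ((M + 1) * s') ≤ 3 / (2 * M ^ 2 * s') := by
      rw [hMs, hMs']
      rw [div_sub_div _ _ (by positivity) (by positivity), div_le_div_iff₀ (by positivity) (by positivity)]
      have hM2 : M ^ 2 = s ^ 4 := by rw [← hs2]; ring
      rw [hM2]
      nlinarith [mul_le_mul_of_nonneg_right key (by positivity : (0:ℝ) ≤ s ^ 3 * s'),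
        hs0, hs'0, sq_nonneg (s*s')]
    calc (1 / (M * s) - 1 / ((M + 1) * s')) ^ 2 ≤ (3 / (2 * M ^ 2 * s')) ^ 2 := by
          apply pow_le_pow_left₀ hd_pos.le hd_le
      _ = 9 / (4 * M ^ 4 * (M + 1)) := by
          rw [div_pow]; rw [mul_pow, mul_pow, ← hs'2]; ring_nf

lemma aux_A (M a t : ℝ) (hM : 3 ≤ M) (ha : 0 < a) (ha' : a ≤ 9 / (4 * M ^ 4 * (M + 1)))
    (ht0 : 0 < t) (ht : t ≤ 2 * π / (2 * M + 1)) :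
    0 < Real.sin (M * t) / M ^ 2 - Real.sin ((M + 1) * t) / (M + 1) ^ 2 - a * Real.sin t := by
  have hπ1 := Real.pi_gt_d6
  have hπ2 := Real.pi_lt_d6
  have hM0 : (0:ℝ) < M := by linarith
  have hM10 : (0:ℝ) < M + 1 := by linarith
  have haM : a * (4 * M ^ 4 * (M + 1)) ≤ 9 := by
    rw [le_div_iff₀ (by positivity)] at ha'; linarith
  have hMt : M * t ≤ π - π / (2 * M + 1) := by
    have h1 : M * t ≤ M * (2 * π / (2 * M + 1)) := by nlinarith
    have h2 : M * (2 * π / (2 * M + 1)) = π - π / (2 * M + 1) := by field_simp; ring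
    linarith
  have hMt0 : 0 < M * t := by positivity
  have hMtπ : M * t ≤ π := by
    have : 0 < π / (2*M+1) := by positivity
    linarith
  have htπ : t ≤ π := by
    have : 2 * π / (2 * M + 1) ≤ π := by rw [div_le_iff₀ (by positivity)]; nlinarith
    linarith
  have hsint0 : 0 ≤ Real.sin t := Real.sin_nonneg_of_nonneg_of_le_pi ht0.le htπ
  have hsintle : Real.sin t ≤ t := Real.sin_le ht0.le
  have hbr : (2*M+1) ≤ (M+1)^2 - M^2 * Real.cos t := by nlinarith [Real.cos_le_one t, sq_nonneg M]
  have expand : Real.sin (M * t) / M ^ 2 - Real.sin ((M + 1) * t) / (M + 1) ^ 2 - a * Real.sin t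
      = (Real.sin (M*t) * ((M+1)^2 - M^2 * Real.cos t) - Real.cos (M*t) * Real.sin t * M^2
          - a * Real.sin t * (M^2 * (M+1)^2)) / (M^2 * (M+1)^2) := by
    rw [show (M+1)*t = M*t + t by ring, Real.sin_add]; field_simp; ring
  rw [expand]
  apply div_pos _ (by positivity)
  have ha4 : a * Real.sin t * (M ^ 2 * (M + 1) ^ 2) * (4 * M ^ 2) ≤ 9 * (M + 1) * Real.sin t := by
    have h1 : a * Real.sin t * (M ^ 2 * (M + 1) ^ 2) * (4 * M ^ 2)
        = (a * (4 * M ^ 4 * (M + 1))) * ((M + 1) * Real.sin t) := by ring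
    rw [h1]
    have h2 : 0 ≤ (M + 1) * Real.sin t := by positivity
    nlinarith [mul_le_mul_of_nonneg_right haM h2]
  rcases le_or_gt (M * t) (π / 2) with hc | hc
  · -- Case 1 : M t ≤ π/2
    have hsinMt0 : 0 ≤ Real.sin (M*t) :=
      Real.sin_nonneg_of_nonneg_of_le_pi hMt0.le hMtπ
    have hJ : 2 / π * (M * t) ≤ Real.sin (M * t) := Real.mul_le_sin hMt0.le hc
    have hJ' : 2 * (M * t) ≤ π * Real.sin (M * t) := by
      rw [div_mul_eq_mul_div, div_le_iff₀ (by positivity)] at hJ; linarith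
    have e1 : Real.sin (M*t) * (2*M+1) ≤ Real.sin (M*t) * ((M+1)^2 - M^2 * Real.cos t) :=
      mul_le_mul_of_nonneg_left hbr hsinMt0
    have e2 : 2*(M*t)*(2*M+1) ≤ π * (Real.sin (M*t) * (2*M+1)) := by nlinarith [hJ']
    have e3 : Real.cos (M*t) * Real.sin t ≤ t := by
      calc Real.cos (M*t) * Real.sin t ≤ 1 * Real.sin t :=
            mul_le_mul_of_nonneg_right (Real.cos_le_one _) hsint0
        _ ≤ t := by linarith
    have C1 : 2*(M*t)*(2*M+1) ≤ π * (Real.sin (M*t) * ((M+1)^2 - M^2 * Real.cos t)) :=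
      e2.trans (mul_le_mul_of_nonneg_left e1 Real.pi_pos.le)
    have B1 := mul_le_mul_of_nonneg_left C1 (show (0:ℝ) ≤ 4*M^2 by positivity)
    have B2 := mul_le_mul_of_nonneg_left e3 (show (0:ℝ) ≤ 4*M^4*π by positivity)
    have h9 : 9 * (M+1) * Real.sin t ≤ 9 * (M+1) * t := by nlinarith
    have B3 := mul_le_mul_of_nonneg_left (ha4.trans h9) Real.pi_pos.le
    have hnum : 4*π*M^4 + 9*π*(M+1) < 8*M^3*(2*M+1) := by
      have q1 : π*M^4 ≤ 3.141593*M^4 :=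
        mul_le_mul_of_nonneg_right hπ2.le (pow_nonneg hM0.le 4)
      have q2 : π*(M+1) ≤ 3.141593*(M+1) := mul_le_mul_of_nonneg_right hπ2.le hM10.le
      have q3 : M^4 ≥ 27*M := by nlinarith [hM, sq_nonneg (M-3), sq_nonneg M, hM0]
      nlinarith [q1, q2, q3, hM, pow_pos hM0 3, hM0]
    have B4 : 0 < t * (8*M^3*(2*M+1) - (4*π*M^4 + 9*π*(M+1))) := mul_pos ht0 (by linarith)
    have key : 0 < 4*M^2*π * (Real.sin (M*t) * ((M+1)^2 - M^2 * Real.cos t)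
        - Real.cos (M*t) * Real.sin t * M^2 - a * Real.sin t * (M^2 * (M+1)^2)) := by
      linarith [B1, B2, B3, B4]
    by_contra hcon
    push_neg at hcon
    have hc2 : (0:ℝ) ≤ 4*M^2*π := by positivity
    linarith [key, mul_nonpos_of_nonneg_of_nonpos hc2 hcon]
  · -- Case 2 : π/2 ≤ M t
    set w := π - M * t with hw_def
    have hw1 : π / (2*M+1) ≤ w := by simp only [hw_def]; linarith
    have hw2 : w ≤ π / 2 := by simp only [hw_def]; linarith
    have hw0 : 0 < w := lt_of_lt_of_le (by positivity) hw1
    have hsMt : Real.sin (M*t) = Real.sin w := by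
      rw [show M*t = π - w by simp [hw_def], Real.sin_pi_sub]
    have hJ : 2 / π * w ≤ Real.sin w := Real.mul_le_sin hw0.le hw2
    have hJ' : 2 * w ≤ π * Real.sin w := by
      rw [div_mul_eq_mul_div, div_le_iff₀ (by positivity)] at hJ; linarith
    have hsinw0 : 0 ≤ Real.sin w := Real.sin_nonneg_of_nonneg_of_le_pi hw0.le (by linarith)
    have hsinw : 2 ≤ (2*M+1) * Real.sin w := by
      have h1 : 2 * π ≤ 2 * w * (2*M+1) := by
        have h2 : π ≤ w * (2*M+1) := (div_le_iff₀ (by positivity)).mp hw1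
        linarith
      nlinarith [mul_le_mul_of_nonneg_left hJ' (show (0:ℝ) ≤ 2*M+1 by positivity), Real.pi_pos]
    have hcosMt : Real.cos (M*t) ≤ 0 :=
      Real.cos_nonpos_of_pi_div_two_le_of_le hc.le (by nlinarith)
    have hta : Real.sin t * (2*M+1) ≤ 2 * π := by
      have h2 : t * (2*M+1) ≤ 2 * π := (le_div_iff₀ (by positivity)).mp ht
      nlinarith [h2, mul_le_mul_of_nonneg_right hsintle (show (0:ℝ) ≤ 2*M+1 by positivity)]
    have C1 : 2*(2*M+1) ≤ ((2*M+1) * Real.sin w) * ((M+1)^2 - M^2*Real.cos t) := by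
      have := mul_le_mul hsinw hbr (by positivity) (le_trans (by norm_num) hsinw)
      nlinarith [this]
    have B1 := mul_le_mul_of_nonneg_left C1 (show (0:ℝ) ≤ 4*M^2 by positivity)
    have B2 : 0 ≤ -(Real.cos (M*t) * Real.sin t * M^2) * (4*M^2*(2*M+1)) := by
      apply mul_nonneg _ (by positivity)
      rw [neg_nonneg]
      exact mul_nonpos_of_nonpos_of_nonneg (mul_nonpos_of_nonpos_of_nonneg hcosMt hsint0) (sq_nonneg M)
    have B3 : a * Real.sin t * (M^2*(M+1)^2) * (4*M^2) * (2*M+1) ≤ 9*(M+1)*(2*π) := by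
      have h1 := mul_le_mul_of_nonneg_right ha4 (show (0:ℝ) ≤ 2*M+1 by positivity)
      have h2 : 9 * (M+1) * Real.sin t * (2*M+1) ≤ 9*(M+1)*(2*π) := by
        have := mul_le_mul_of_nonneg_left hta (show (0:ℝ) ≤ 9*(M+1) by positivity)
        nlinarith [this]
      linarith [h1, h2]
    have hnum2 : 18*π*(M+1) < 8*M^2*(2*M+1) := by
      have q2 : π*(M+1) ≤ 3.141593*(M+1) := mul_le_mul_of_nonneg_right hπ2.le hM10.le
      nlinarith [q2, hM, hM0]
    have key : 0 < 4*M^2*(2*M+1) * (Real.sin (M*t) * ((M+1)^2 - M^2 * Real.cos t)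
        - Real.cos (M*t) * Real.sin t * M^2 - a * Real.sin t * (M^2 * (M+1)^2)) := by
      rw [hsMt]
      linarith [B1, B2, B3, hnum2]
    by_contra hcon
    push_neg at hcon
    have hc2 : (0:ℝ) ≤ 4*M^2*(2*M+1) := by positivity
    linarith [key, mul_nonpos_of_nonneg_of_nonpos hc2 hcon]

lemma aux_B (M a t : ℝ) (hM : 3 ≤ M) (ha : 0 < a)
    (ht : 3 * π / (2 * M) ≤ t) (ht' : t ≤ 2 * π / (M + 1)) :
    Real.sin (M * t) / M ^ 2 - Real.sin ((M + 1) * t) / (M + 1) ^ 2 - a * Real.sin t < 0 := by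
  have hπ := Real.pi_pos
  have hM0 : (0:ℝ) < M := by linarith
  have hM10 : (0:ℝ) < M + 1 := by linarith
  have ht0 : 0 < t := lt_of_lt_of_le (by positivity) ht
  set u : ℝ := 2 * π - M * t with hu_def
  set v : ℝ := 2 * π - (M + 1) * t with hv_def
  have hMt1 : 3 * π / 2 ≤ M * t := by
    calc 3 * π / 2 = M * (3 * π / (2 * M)) := by field_simp
      _ ≤ M * t := by nlinarith [ht]
  have hMt2 : M * t ≤ 2 * π - 2 * π / (M + 1) := by
    have : M * t ≤ M * (2 * π / (M + 1)) := by nlinarith [ht']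
    calc M * t ≤ M * (2 * π / (M + 1)) := this
      _ = 2 * π - 2 * π / (M + 1) := by field_simp; ring
  have hv1 : 0 ≤ v := by
    have : (M + 1) * t ≤ 2 * π := by
      calc (M + 1) * t ≤ (M + 1) * (2 * π / (M + 1)) := by nlinarith [ht']
        _ = 2 * π := by field_simp
    simp [hv_def]; linarith
  have hu1 : u ≤ π / 2 := by simp only [hu_def]; linarith
  have hu2 : 2 * π / (M + 1) ≤ u := by simp only [hu_def]; linarith
  have hu0 : 0 < u := lt_of_lt_of_le (by positivity) hu2
  have hvu : v = u - t := by simp [hu_def, hv_def]; ring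
  have hsMt : Real.sin (M * t) = - Real.sin u := by
    rw [show M * t = -u + 2*π by simp [hu_def], Real.sin_add_two_pi, Real.sin_neg]
  have hsM1t : Real.sin ((M + 1) * t) = - Real.sin v := by
    rw [show (M + 1) * t = -v + 2*π by simp [hv_def], Real.sin_add_two_pi, Real.sin_neg]
  have hsinu : 0 < Real.sin u := Real.sin_pos_of_pos_of_lt_pi hu0 (by linarith)
  have hsv : Real.sin v ≤ Real.sin u := by
    have h := Real.sin_sub_sin u v
    have h1 : 0 ≤ Real.sin ((u - v) / 2) := by
      apply Real.sin_nonneg_of_nonneg_of_le_pi <;> rw [hvu] <;> [linarith; skip]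
      have : t ≤ π := by
        have : 2 * π / (M + 1) ≤ π := by rw [div_le_iff₀ (by positivity)]; nlinarith
        linarith
      linarith
    have h2 : 0 ≤ Real.cos ((u + v) / 2) := by
      apply Real.cos_nonneg_of_mem_Icc
      have : v ≤ u := by rw [hvu]; linarith
      constructor <;> linarith
    nlinarith [h, h1, h2]
  have hsint : 0 ≤ Real.sin t := by
    apply Real.sin_nonneg_of_nonneg_of_le_pi ht0.le
    have : 2 * π / (M + 1) ≤ π := by rw [div_le_iff₀ (by positivity)]; nlinarith
    linarith
  rw [hsMt, hsM1t]
  have expand : -Real.sin u / M ^ 2 - -Real.sin v / (M + 1) ^ 2 - a * Real.sin t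
      = ((-Real.sin u) * (M+1)^2 + Real.sin v * M^2 - a * Real.sin t * (M^2 * (M+1)^2))
        / (M^2 * (M+1)^2) := by
    field_simp; ring
  rw [expand]
  apply div_neg_of_neg_of_pos _ (by positivity)
  have hav : 0 ≤ a * Real.sin t * (M^2 * (M+1)^2) := by positivity
  nlinarith [mul_le_mul_of_nonneg_right hsv (sq_nonneg M), hsinu, hM0]

lemma aux_C (M a t : ℝ) (hM : 3 ≤ M) (ha : 0 < a)
    (ht : 2 * π / (2 * M + 1) ≤ t) (ht' : t ≤ 3 * π / (2 * M)) :
    Real.cos (M * t) / M - Real.cos ((M + 1) * t) / (M + 1) - a * Real.cos t < 0 := by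
  have hπ1 := Real.pi_gt_d6
  have hπ2 := Real.pi_lt_d6
  have hπ0 := Real.pi_pos
  have hM0 : (0:ℝ) < M := by linarith
  have hM10 : (0:ℝ) < M + 1 := by linarith
  have ht0 : 0 < t := lt_of_lt_of_le (by positivity) ht
  have htu : t ≤ π / 2 := by
    have : 3 * π / (2 * M) ≤ π / 2 := by
      rw [div_le_div_iff₀ (by positivity) (by norm_num)]; nlinarith only [hπ0, hM]
    linarith
  have hsint0 : 0 < Real.sin t := Real.sin_pos_of_pos_of_lt_pi ht0 (by linarith)
  have hcost0 : 0 ≤ Real.cos t := Real.cos_nonneg_of_mem_Icc ⟨by linarith, htu⟩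
  have hcost1 : Real.cos t ≤ 1 := Real.cos_le_one t
  have hMt_ub : M * t ≤ 3 * π / 2 := by
    have h1 : M * t ≤ M * (3 * π / (2 * M)) := by nlinarith only [ht', hM0]
    have h2 : M * (3 * π / (2 * M)) = 3 * π / 2 := by field_simp
    linarith
  have hMt_lb : π - π / (2 * M + 1) ≤ M * t := by
    have h1 : M * (2 * π / (2 * M + 1)) ≤ M * t := by nlinarith only [ht, hM0]
    have h2 : M * (2 * π / (2 * M + 1)) = π - π / (2 * M + 1) := by field_simp; ring
    linarith
  have hbr2 : (1:ℝ) ≤ (M + 1) - M * Real.cos t := by nlinarith only [hcost1, hM0]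
  have expand : Real.cos (M * t) / M - Real.cos ((M + 1) * t) / (M + 1) - a * Real.cos t
      = (Real.cos (M*t) * ((M+1) - M * Real.cos t) + Real.sin (M*t) * Real.sin t * M
          - a * Real.cos t * (M * (M+1))) / (M * (M+1)) := by
    rw [show (M+1)*t = M*t + t by ring, Real.cos_add]; field_simp; ring
  rw [expand]
  apply div_neg_of_neg_of_pos _ (by positivity)
  rcases le_or_gt (M * t) π with hc | hc
  · -- Case I₁ : Mt ≤ π
    obtain ⟨s, hs_def⟩ : ∃ s : ℝ, s = π - M * t := ⟨_, rfl⟩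
    have hs0 : 0 ≤ s := by rw [hs_def]; linarith
    have hs_ub : s * (2*M+1) ≤ π := by
      have h1 : s ≤ π / (2*M+1) := by rw [hs_def]; linarith
      calc s * (2*M+1) ≤ (π / (2*M+1)) * (2*M+1) := by nlinarith only [h1, hM0]
        _ = π := by field_simp
    have hsπ : s ≤ π := by nlinarith only [hs_ub, hs0, hM0, hπ0]
    have hs_small : s ≤ 0.44880 := by
      have q1 : s * 7 ≤ s * (2*M+1) := mul_le_mul_of_nonneg_left (by linarith) hs0
      linarith only [q1, hs_ub, hπ2]
    have hcMt : Real.cos (M*t) = - Real.cos s := by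
      rw [show M*t = π - s by rw [hs_def]; ring, Real.cos_pi_sub]
    have hsMt : Real.sin (M*t) = Real.sin s := by
      rw [show M*t = π - s by rw [hs_def]; ring, Real.sin_pi_sub]
    rw [hcMt, hsMt]
    have htltpidivtwo : t < π / 2 := by
      have e1 : t ≤ π / M := by
        rw [le_div_iff₀ hM0]; linarith [mul_comm M t]
      have e2 : π / M ≤ π / 3 := by apply div_le_div_of_nonneg_left hπ0.le (by norm_num) hM
      have : π / 3 < π / 2 := by linarith
      linarith
    have hcost_pos : 0 < Real.cos t :=
      Real.cos_pos_of_mem_Ioo ⟨by linarith, htltpidivtwo⟩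
    have hsins_le : Real.sin s ≤ s := Real.sin_le hs0
    have hsins0 : 0 ≤ Real.sin s := Real.sin_nonneg_of_nonneg_of_le_pi hs0 hsπ
    have hsint_le : Real.sin t ≤ t := Real.sin_le ht0.le
    have hcoss : (0.89:ℝ) ≤ Real.cos s := by
      have h1 := Real.one_sub_sq_div_two_le_cos (x := s)
      have q1 : s^2 ≤ 0.44880^2 := by nlinarith only [hs_small, hs0]
      norm_num at q1
      linarith only [h1, q1]
    have hq : Real.cos t ≤ 1 - 2/π^2 * t^2 :=
      Real.cos_le_one_sub_mul_cos_sq (abs_le.mpr ⟨by linarith, by linarith⟩)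
    have hB2 : π^2 + 2*M*t^2 ≤ π^2 * ((M+1) - M * Real.cos t) := by
      have h1 : M * Real.cos t ≤ M * (1 - 2/π^2 * t^2) := by nlinarith only [hq, hM0]
      have q := mul_le_mul_of_nonneg_left h1 (sq_nonneg π)
      have h2 : π^2 * (M * (1 - 2/π^2 * t^2)) = π^2 * M - 2*M*t^2 := by field_simp
      nlinarith only [q, h2]
    -- numeric core
    have hcore : 31.006332*M*t ≤ 8.7839*(2*M+1) + 1.78*M*t^2*(2*M+1) := by
      have hA : (0:ℝ) < 1.78*M*(2*M+1) := by positivity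
      have sq := sq_nonneg (1.78*M*(2*M+1)*t - 15.503166*M)
      have hq3 : (0:ℝ) ≤ M * (8.7839*1.78*(2*M+1)^2 - 15.503166^2*M) := by
        apply mul_nonneg hM0.le
        nlinarith only [hM, sq_nonneg (M-3)]
      have step1 : 31.006332*M*t*(1.78*M*(2*M+1))
          ≤ (8.7839*(2*M+1) + 1.78*M*t^2*(2*M+1))*(1.78*M*(2*M+1)) := by
        nlinarith only [sq, hq3]
      exact le_of_mul_le_mul_right step1 hA
    have key : M * (Real.sin s * Real.sin t) ≤ Real.cos s * ((M+1) - M * Real.cos t) := by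
      have k1 : Real.sin s * Real.sin t ≤ s * t :=
        mul_le_mul hsins_le hsint_le hsint0.le hs0
      have k2 : (2*M+1) * (M * (s * t)) ≤ π * (M * t) := by
        have q := mul_le_mul_of_nonneg_right hs_ub (by positivity : (0:ℝ) ≤ M * t)
        nlinarith only [q]
      have k3 : π^2 * ((2*M+1) * (M * (s*t))) ≤ π^2 * (π * (M*t)) :=
        mul_le_mul_of_nonneg_left k2 (sq_nonneg π)
      have k4 : π^2 * (π * (M*t)) ≤ 31.006332 * M * t := by
        have q2 : π^2 ≤ 9.8696070 := by nlinarith only [hπ2, hπ0]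
        have q3 : π^2 * π ≤ 9.8696070 * 3.141593 :=
          mul_le_mul q2 hπ2.le hπ0.le (by norm_num)
        have hπ3 : π^2 * π ≤ 31.006332 := by nlinarith only [q3]
        have q4 := mul_le_mul_of_nonneg_right hπ3 (le_of_lt (mul_pos hM0 ht0))
        nlinarith only [q4]
      have k5 : 8.7839*(2*M+1) + 1.78*M*t^2*(2*M+1)
          ≤ (2*M+1) * π^2 * (Real.cos s * ((M+1) - M*Real.cos t)) := by
        have w1 : (0:ℝ) ≤ π^2 + 2*M*t^2 := by positivity
        have w2 : (0.89:ℝ) * (π^2 + 2*M*t^2) ≤ Real.cos s * (π^2 + 2*M*t^2) :=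
          mul_le_mul_of_nonneg_right hcoss w1
        have w3 : Real.cos s * (π^2 + 2*M*t^2) ≤ Real.cos s * (π^2 * ((M+1) - M * Real.cos t)) :=
          mul_le_mul_of_nonneg_left hB2 (by linarith)
        have k51 : (0.89:ℝ) * (π^2 + 2*M*t^2) ≤ Real.cos s * (π^2 * ((M+1) - M * Real.cos t)) := by
          linarith only [w2, w3]
        have k52 : (2*M+1) * ((0.89:ℝ) * (π^2 + 2*M*t^2))
            ≤ (2*M+1) * (Real.cos s * (π^2 * ((M+1) - M * Real.cos t))) :=
          mul_le_mul_of_nonneg_left k51 (by positivity)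
        have hπsq : (9.8696:ℝ) ≤ π^2 := by nlinarith only [hπ1, hπ0]
        have q := mul_le_mul_of_nonneg_left hπsq (show (0:ℝ) ≤ 0.89*(2*M+1) by positivity)
        nlinarith only [k52, q, hM]
      have k6 : (2*M+1) * π^2 * (M * (Real.sin s * Real.sin t))
          ≤ (2*M+1) * π^2 * (Real.cos s * ((M+1) - M*Real.cos t)) := by
        have q := mul_le_mul_of_nonneg_left k1 (show (0:ℝ) ≤ (2*M+1) * π^2 * M by positivity)
        have k61 : (2*M+1) * π^2 * (M * (Real.sin s * Real.sin t))
            ≤ π^2 * ((2*M+1) * (M * (s*t))) := by nlinarith only [q]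
        have c1 := (k61.trans (k3.trans k4)).trans hcore
        have c2 := c1.trans k5
        nlinarith only [c2]
      have hpos : (0:ℝ) < (2*M+1) * π^2 := by positivity
      exact le_of_mul_le_mul_left k6 hpos
    have hlast : 0 < a * Real.cos t * (M * (M+1)) := by positivity
    nlinarith only [key, hlast]
  · -- Case I₂ : π < Mt
    have hcosMt : Real.cos (M*t) ≤ 0 :=
      Real.cos_nonpos_of_pi_div_two_le_of_le (by linarith) (by linarith)
    have hsinMt : Real.sin (M*t) ≤ 0 := by
      have h1 : Real.sin (M*t - π) = - Real.sin (M*t) := Real.sin_sub_pi _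
      have h2 : 0 ≤ Real.sin (M*t - π) :=
        Real.sin_nonneg_of_nonneg_of_le_pi (by linarith) (by linarith)
      linarith
    have hterm2 : Real.sin (M*t) * Real.sin t * M ≤ 0 := by
      apply mul_nonpos_of_nonpos_of_nonneg _ hM0.le
      exact mul_nonpos_of_nonpos_of_nonneg hsinMt hsint0.le
    have hterm3 : 0 ≤ a * Real.cos t * (M * (M+1)) := by positivity
    rcases le_or_gt (M*t) (5*π/4) with hc2 | hc2
    · have h1 : Real.cos (M*t - π) = - Real.cos (M*t) := Real.cos_sub_pi _
      have h2 := Real.one_sub_sq_div_two_le_cos (x := M*t - π)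
      have h3 : M*t - π ≤ 0.7854 := by nlinarith only [hc2, hπ2]
      have h4 : 0 ≤ M*t - π := by linarith
      have hcos69 : Real.cos (M*t) ≤ -0.69 := by nlinarith only [h1, h2, h3, h4]
      have hfirst : Real.cos (M*t) * ((M+1) - M * Real.cos t) ≤ -0.69 := by
        calc Real.cos (M*t) * ((M+1) - M * Real.cos t) ≤ -0.69 * ((M+1) - M * Real.cos t) :=
              mul_le_mul_of_nonneg_right hcos69 (by linarith)
          _ ≤ -0.69 := by linarith only [hbr2]
      linarith only [hterm2, hterm3, hfirst]
    · have h4 : 0 ≤ M*t - π := by linarith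
      have h5 : M*t - π ≤ π/2 := by linarith
      have hJ : 2/π * (M*t - π) ≤ Real.sin (M*t - π) := Real.mul_le_sin h4 h5
      have h1 : Real.sin (M*t - π) = - Real.sin (M*t) := Real.sin_sub_pi _
      have hsinhalf : Real.sin (M*t) ≤ -(1/2) := by
        have h6 : π/4 ≤ M*t - π := by linarith
        have h7 : 2/π * (π/4) ≤ 2/π * (M*t - π) :=
          mul_le_mul_of_nonneg_left h6 (by positivity)
        have h8 : 2/π * (π/4) = 1/2 := by field_simp; ring
        linarith only [hJ, h1, h7, h8]
      have hfirst : Real.cos (M*t) * ((M+1) - M * Real.cos t) ≤ 0 :=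
        mul_nonpos_of_nonpos_of_nonneg hcosMt (by linarith)
      have hsecond : Real.sin (M*t) * Real.sin t * M ≤ -(1/2) * Real.sin t * M := by
        have q := mul_le_mul_of_nonneg_right
          (mul_le_mul_of_nonneg_right hsinhalf hsint0.le) hM0.le
        nlinarith only [q]
      have hlast : -(1/2) * Real.sin t * M < 0 := by
        have : 0 < (1/2) * Real.sin t * M := by positivity
        linarith
      linarith only [hfirst, hsecond, hterm3, hlast]

/-- Lemma 6.4: for m ≥ 3 there is t₁ ∈ (2π/(2m+1), 3π/(2m)) with υ_m(t₁) = 0,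
υ_m > 0 on (0,t₁) and υ_m < 0 on (t₁, 2π/(m+1)]. -/
theorem upsilon_sign (m : ℕ) (hm : 3 ≤ m) :
    ∃ t₁ : ℝ, 2 * Real.pi / (2 * m + 1) < t₁ ∧ t₁ < 3 * Real.pi / (2 * m) ∧
      upsilon m t₁ = 0 ∧
      (∀ t : ℝ, 0 < t → t < t₁ → 0 < upsilon m t) ∧
      (∀ t : ℝ, t₁ < t → t ≤ 2 * Real.pi / (m + 1) → upsilon m t < 0) := by
  have hM : (3:ℝ) ≤ (m:ℝ) := by exact_mod_cast hm
  have hM0 : (0:ℝ) < (m:ℝ) := by linarith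
  have hπ0 := Real.pi_pos
  obtain ⟨ha, ha'⟩ := aux_a_bound (m:ℝ) hM
  set A : ℝ := (1 / (m:ℝ) ^ ((3 : ℝ) / 2) - 1 / ((m:ℝ) + 1) ^ ((3 : ℝ) / 2)) ^ 2 with hA_def
  have hups : ∀ t : ℝ, upsilon m t
      = Real.sin ((m:ℝ) * t) / (m:ℝ) ^ 2 - Real.sin (((m:ℝ) + 1) * t) / ((m:ℝ) + 1) ^ 2
        - A * Real.sin t := fun t => rfl
  -- derivative
  have hderiv : ∀ t : ℝ, HasDerivAt (upsilon m)
      (Real.cos ((m:ℝ) * t) / (m:ℝ) - Real.cos (((m:ℝ) + 1) * t) / ((m:ℝ) + 1)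
        - A * Real.cos t) t := by
    intro t
    have h1 : HasDerivAt (fun t : ℝ => Real.sin ((m:ℝ) * t)) (Real.cos ((m:ℝ)*t) * (m:ℝ)) t := by
      simpa [Function.comp_def] using (Real.hasDerivAt_sin ((m:ℝ)*t)).comp t ((hasDerivAt_id t).const_mul (m:ℝ))
    have h2 : HasDerivAt (fun t : ℝ => Real.sin (((m:ℝ)+1) * t))
        (Real.cos (((m:ℝ)+1)*t) * ((m:ℝ)+1)) t := by
      simpa [Function.comp_def] using (Real.hasDerivAt_sin (((m:ℝ)+1)*t)).comp t ((hasDerivAt_id t).const_mul ((m:ℝ)+1))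
    have h3 : HasDerivAt (fun t : ℝ => A * Real.sin t) (A * Real.cos t) t :=
      (Real.hasDerivAt_sin t).const_mul A
    have htot := ((h1.div_const ((m:ℝ)^2)).sub (h2.div_const (((m:ℝ)+1)^2))).sub h3
    have heq : upsilon m = fun t : ℝ =>
        Real.sin ((m:ℝ) * t) / (m:ℝ) ^ 2 - Real.sin (((m:ℝ) + 1) * t) / ((m:ℝ) + 1) ^ 2
        - A * Real.sin t := rfl
    rw [heq]
    convert htot using 1
    · rfl
    · rfl
    · rfl
    have hm0 : (m:ℝ) ≠ 0 := hM0.ne'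
    have hm1 : (m:ℝ) + 1 ≠ 0 := by positivity
    rw [pow_two, pow_two, mul_div_mul_right _ _ hm0, mul_div_mul_right _ _ hm1]
  have hcontfull : Continuous (upsilon m) := by
    have heq : upsilon m = fun t : ℝ =>
        Real.sin ((m:ℝ) * t) / (m:ℝ) ^ 2 - Real.sin (((m:ℝ) + 1) * t) / ((m:ℝ) + 1) ^ 2
        - A * Real.sin t := rfl
    rw [heq]; fun_prop
  set lo : ℝ := 2 * π / (2 * (m:ℝ) + 1) with hlo_def
  set hi : ℝ := 3 * π / (2 * (m:ℝ)) with hhi_def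
  have hlo0 : 0 < lo := by positivity
  have hlohi : lo < hi := by
    rw [hlo_def, hhi_def, div_lt_div_iff₀ (by positivity) (by positivity)]
    nlinarith [hπ0, hM]
  have hhiT : hi ≤ 2 * π / ((m:ℝ) + 1) := by
    rw [hhi_def, div_le_div_iff₀ (by positivity) (by positivity)]
    nlinarith [hπ0, hM]
  have hanti : StrictAntiOn (upsilon m) (Set.Icc lo hi) := by
    apply strictAntiOn_of_deriv_neg (convex_Icc _ _) hcontfull.continuousOn
    intro x hx
    rw [interior_Icc] at hx
    rw [(hderiv x).deriv]
    exact aux_C (m:ℝ) A x hM ha hx.1.le (le_of_lt hx.2)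
  have hlo_pos : 0 < upsilon m lo := by
    rw [hups]
    exact aux_A (m:ℝ) A lo hM ha ha' hlo0 le_rfl
  have hhi_neg : upsilon m hi < 0 := by
    rw [hups]
    exact aux_B (m:ℝ) A hi hM ha le_rfl hhiT
  obtain ⟨t₁, ht₁mem, ht₁⟩ := intermediate_value_Ioo' hlohi.le hcontfull.continuousOn
    (Set.mem_Ioo.mpr ⟨hhi_neg, hlo_pos⟩)
  refine ⟨t₁, ht₁mem.1, ht₁mem.2, ht₁, ?_, ?_⟩
  · intro t ht0 htt1
    rcases le_or_gt t lo with h | h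
    · rw [hups]
      exact aux_A (m:ℝ) A t hM ha ha' ht0 h
    · have hmem1 : t ∈ Set.Icc lo hi := ⟨h.le, (htt1.trans ht₁mem.2).le⟩
      have hmem2 : t₁ ∈ Set.Icc lo hi := ⟨ht₁mem.1.le, ht₁mem.2.le⟩
      have := hanti hmem1 hmem2 htt1
      rw [ht₁] at this
      exact this
  · intro t ht₁t htT
    rcases le_or_gt t hi with h | h
    · have hmem1 : t₁ ∈ Set.Icc lo hi := ⟨ht₁mem.1.le, ht₁mem.2.le⟩
      have hmem2 : t ∈ Set.Icc lo hi := ⟨(ht₁mem.1.trans ht₁t).le, h⟩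
      have := hanti hmem1 hmem2 ht₁t
      rw [ht₁] at this
      exact this
    · rw [hups]
      exact aux_B (m:ℝ) A t hM ha h.le htT
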